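/- Let m be a positive integer and p ∈ [0,1]. For integers t ≥ 2 define H(m,t+1) = p·(2mt+1-m)/(t(2mt+1-2m)) + (1-p)·m/(2mt) and K(m,t+1) = 1 - H(m,t+1). Then lim_{t→∞} 1/(t - (t-1)·K(m,t+1)^m) = 2/(2+m+mp). -/

import Mathlib

open Filter Finset

/-- The Stolz–Cesàro step establishing that the limiting proportion of degree-`m`
vertices in the PA-APA model equals `2/(2+m+mp)`. Here
`H(m,t+1) = p (2mt+1-m)/(t(2mt+1-2m)) + (1-p) m/(2mt)` and `K(m,t+1) = 1 - H(m,t+1)`. -/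
theorem pa_apa_stolz_cesaro_deg_m (m : ℕ) (hm : 1 ≤ m) (p : ℝ) (hp0 : 0 ≤ p) (hp1 : p ≤ 1) :
    Tendsto (fun t : ℕ =>
      1 / ((t : ℝ) - ((t : ℝ) - 1) *
        (1 - (p * (2 * (m : ℝ) * t + 1 - m) / ((t : ℝ) * (2 * (m : ℝ) * t + 1 - 2 * m))
          + (1 - p) * (m : ℝ) / (2 * (m : ℝ) * t))) ^ m))
      atTop (nhds (2 / (2 + (m : ℝ) + (m : ℝ) * p))) := by
  have hm' : (1:ℝ) ≤ m := by exact_mod_cast hm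
  set f : ℕ → ℝ := fun t =>
    p * (2 * (m : ℝ) * t + 1 - m) / ((t : ℝ) * (2 * (m : ℝ) * t + 1 - 2 * m))
      + (1 - p) * (m : ℝ) / (2 * (m : ℝ) * t) with hf
  have hx : Tendsto (fun t : ℕ => ((t:ℝ))⁻¹) atTop (nhds 0) :=
    tendsto_inv_atTop_nhds_zero_nat
  have h2m : (2*(m:ℝ)) ≠ 0 := by nlinarith
  -- Step A: t * f t → (1+p)/2
  have hA : Tendsto (fun t : ℕ => (t:ℝ) * f t) atTop (nhds ((1 + p)/2)) := by
    have hnum : Tendsto (fun t : ℕ => 2*(m:ℝ) + (1 - m) * ((t:ℝ))⁻¹) atTop (nhds (2*m)) := by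
      have := (tendsto_const_nhds (x := 2*(m:ℝ))).add (hx.const_mul ((1:ℝ) - m))
      simpa using this
    have hden : Tendsto (fun t : ℕ => 2*(m:ℝ) + (1 - 2*m) * ((t:ℝ))⁻¹) atTop (nhds (2*m)) := by
      have := (tendsto_const_nhds (x := 2*(m:ℝ))).add (hx.const_mul ((1:ℝ) - 2*m))
      simpa using this
    have hratio := hnum.div hden h2m
    rw [div_self h2m] at hratio
    have hlim : Tendsto (fun t : ℕ =>
        p * ((2*(m:ℝ) + (1 - m) * ((t:ℝ))⁻¹) / (2*(m:ℝ) + (1 - 2*m) * ((t:ℝ))⁻¹)) + (1 - p)/2)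
        atTop (nhds ((1 + p)/2)) := by
      have := (hratio.const_mul p).add (tendsto_const_nhds (x := (1 - p)/2))
      convert this using 2
      · simp only [Pi.div_apply]
      · ring
    refine Tendsto.congr' ?_ hlim
    filter_upwards [eventually_ge_atTop 1] with t ht
    have ht' : (1:ℝ) ≤ t := by exact_mod_cast ht
    have ht0 : (t:ℝ) ≠ 0 := by linarith
    have hd2 : 2*(m:ℝ)*t + 1 - 2*m ≠ 0 := by nlinarith
    have hd2' : 2*(m:ℝ) + (1 - 2*m) * ((t:ℝ))⁻¹ ≠ 0 := by
      intro h
      apply hd2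
      have := congrArg (· * (t:ℝ)) h
      field_simp at this
      linarith
    have hd2b : (1 - (m:ℝ)*2 + (m:ℝ)*(t:ℝ)*2) ≠ 0 := by
      intro h; apply hd2; linarith
    have e1 : (2*(m:ℝ) + (1 - m) * ((t:ℝ))⁻¹) = (2*(m:ℝ)*t+1-m)/t := by
      field_simp; ring
    have e2 : (2*(m:ℝ) + (1 - 2*m) * ((t:ℝ))⁻¹) = (2*(m:ℝ)*t+1-2*m)/t := by
      field_simp; ring
    simp only [hf]
    rw [e1, e2, div_div_div_cancel_right₀ ht0]
    field_simp
  -- Step B: f → 0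
  have hB : Tendsto f atTop (nhds 0) := by
    have : Tendsto (fun t : ℕ => ((t:ℝ) * f t) * ((t:ℝ))⁻¹) atTop (nhds (((1+p)/2) * 0)) :=
      hA.mul hx
    rw [mul_zero] at this
    refine Tendsto.congr' ?_ this
    filter_upwards [eventually_ge_atTop 1] with t ht
    have ht0 : (t:ℝ) ≠ 0 := by
      have : (1:ℝ) ≤ t := by exact_mod_cast ht
      linarith
    field_simp
  -- K → 1
  have hK : Tendsto (fun t : ℕ => 1 - f t) atTop (nhds 1) := by
    have := (tendsto_const_nhds (x := (1:ℝ))).sub hB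
    simpa using this
  -- sum of powers → m
  have hS : Tendsto (fun t : ℕ => ∑ i ∈ Finset.range m, (1 - f t) ^ i) atTop (nhds m) := by
    have : Tendsto (fun t : ℕ => ∑ i ∈ Finset.range m, (1 - f t) ^ i) atTop
        (nhds (∑ i ∈ Finset.range m, (1:ℝ) ^ i)) :=
      tendsto_finset_sum _ (fun i _ => by simpa using hK.pow i)
    simpa using this
  have hKm : Tendsto (fun t : ℕ => (1 - f t) ^ m) atTop (nhds 1) := by
    simpa using hK.pow m
  -- denominator limit
  have hD : Tendsto (fun t : ℕ => (t:ℝ) - ((t:ℝ) - 1) * (1 - f t) ^ m) atTop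
      (nhds ((1+p)/2 * m + 1)) := by
    have hlim := ((hA.mul hS).add hKm)
    refine Tendsto.congr ?_ hlim
    intro t
    have hgeom := geom_sum_mul (1 - f t) m
    linear_combination (-(t:ℝ)) * hgeom
  have hL : ((1+p)/2 * (m:ℝ) + 1) ≠ 0 := by nlinarith
  have hfinal := (tendsto_const_nhds (x := (1:ℝ))).div hD hL
  convert hfinal using 2
  · simp only [Pi.div_apply, hf]
  have h1 : (2:ℝ) + m + m*p ≠ 0 := by nlinarith
  rw [div_eq_div_iff h1 hL]
  ring
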